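/- Let n₀ ≥ 1, β ≥ 1, n₁ = β·n₀, K ≥ 1, and let Z⁽⁰⁾ : Fin n₀ → Fin K and Z⁽¹⁾ : Fin n₁ → Fin K be cluster assignments. Then Δ(Z) = 0 if and only if there exists a matching map T : Fin n₁ → Fin n₀, i.e., a surjective map with #T⁻¹({i}) = β for every i ∈ Fin n₀, such that Z⁽¹⁾(j) = Z⁽⁰⁾(T(j)) for all j ∈ Fin n₁. -/

import Mathlib

/-- The group-fairness level Δ(Z) for two cluster assignments. -/
noncomputable def fairnessLevel {n₀ n₁ K : ℕ}
    (Z0 : Fin n₀ → Fin K) (Z1 : Fin n₁ → Fin K) : ℝ :=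
  (1 / 2) * ∑ k : Fin K,
    |((Finset.univ.filter (fun i => Z0 i = k)).card : ℝ) / n₀
      - ((Finset.univ.filter (fun j => Z1 j = k)).card : ℝ) / n₁|

open Finset

theorem perfectly_fair_iff_exists_matching_map
    (n₀ n₁ β K : ℕ) (hn₀ : 1 ≤ n₀) (hβ : 1 ≤ β) (hn₁ : n₁ = β * n₀) (hK : 1 ≤ K)
    (Z0 : Fin n₀ → Fin K) (Z1 : Fin n₁ → Fin K) :
    fairnessLevel Z0 Z1 = 0 ↔
      ∃ T : Fin n₁ → Fin n₀,
        Function.Surjective T ∧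
        (∀ i : Fin n₀, (Finset.univ.filter (fun j => T j = i)).card = β) ∧
        (∀ j : Fin n₁, Z1 j = Z0 (T j)) := by
  have hn₀R : (0:ℝ) < (n₀:ℝ) := by exact_mod_cast hn₀
  have hβR : (0:ℝ) < (β:ℝ) := by exact_mod_cast hβ
  have key : fairnessLevel Z0 Z1 = 0 ↔
      ∀ k : Fin K, (univ.filter (fun j => Z1 j = k)).card
        = β * (univ.filter (fun i => Z0 i = k)).card := by
    unfold fairnessLevel
    rw [mul_eq_zero]
    have h2 : (1:ℝ)/2 ≠ 0 := by norm_num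
    simp only [h2, false_or]
    rw [Finset.sum_eq_zero_iff_of_nonneg (fun k _ => abs_nonneg _)]
    refine ⟨fun h k => ?_, fun h k _ => ?_⟩
    · have := h k (mem_univ k)
      rw [abs_eq_zero, sub_eq_zero] at this
      have hn₁R : (n₁:ℝ) = (β:ℝ) * (n₀:ℝ) := by exact_mod_cast congrArg Nat.cast hn₁
      rw [hn₁R] at this
      field_simp at this
      have : ((univ.filter (fun j => Z1 j = k)).card : ℝ)
          = (β:ℝ) * ((univ.filter (fun i => Z0 i = k)).card : ℝ) := by
        nlinarith [this]
      exact_mod_cast this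
    · rw [abs_eq_zero, sub_eq_zero]
      have hk := h k
      have hn₁R : (n₁:ℝ) = (β:ℝ) * (n₀:ℝ) := by exact_mod_cast congrArg Nat.cast hn₁
      have hckR : ((univ.filter (fun j => Z1 j = k)).card : ℝ)
          = (β:ℝ) * ((univ.filter (fun i => Z0 i = k)).card : ℝ) := by exact_mod_cast hk
      rw [hn₁R, hckR]
      field_simp
  rw [key]
  constructor
  · intro hc
    set A : Fin K → Finset (Fin n₁) := fun k => univ.filter (fun j => Z1 j = k) with hA
    set B : Fin K → Finset (Fin n₀ × Fin β) := fun k => univ.filter (fun p => Z0 p.1 = k) with hB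
    have hBprod : ∀ k, B k = (univ.filter (fun i => Z0 i = k)) ×ˢ (univ : Finset (Fin β)) := by
      intro k; ext p; simp [hB, Finset.mem_product]
    have hcard : ∀ k, (A k).card = (B k).card := by
      intro k
      rw [hBprod k, card_product, card_univ, Fintype.card_fin]
      simpa [hA, mul_comm] using hc k
    let e : ∀ k, (A k : Finset (Fin n₁)) ≃ (B k : Finset (Fin n₀ × Fin β)) :=
      fun k => Finset.equivOfCardEq (hcard k)
    have hmemA : ∀ j : Fin n₁, j ∈ A (Z1 j) := by intro j; simp [hA]
    let f : Fin n₁ → Fin n₀ × Fin β := fun j => ((e (Z1 j)) ⟨j, hmemA j⟩ : Fin n₀ × Fin β)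
    have hf : ∀ j, Z0 (f j).1 = Z1 j := fun j =>
      (mem_filter.mp ((e (Z1 j)) ⟨j, hmemA j⟩).2).2
    have hfeq : ∀ (k : Fin K) (j : Fin n₁) (hm : j ∈ A k),
        f j = ((e k) ⟨j, hm⟩ : Fin n₀ × Fin β) := by
      intro k j hm
      have hzk : Z1 j = k := by simpa [hA] using hm
      subst hzk
      rfl
    have hinj : Function.Injective f := by
      intro j j' hjj
      have hk : Z1 j' = Z1 j := by rw [← hf j, ← hf j', hjj]
      have hmem' : j' ∈ A (Z1 j) := by rw [← hk]; exact hmemA j'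
      have heq : (e (Z1 j)) ⟨j, hmemA j⟩ = (e (Z1 j)) ⟨j', hmem'⟩ := by
        apply Subtype.ext
        rw [← hfeq (Z1 j) j (hmemA j), ← hfeq (Z1 j) j' hmem', hjj]
      have := (e (Z1 j)).injective heq
      simpa using this
    have hbij : Function.Bijective f := by
      rw [Fintype.bijective_iff_injective_and_card]
      refine ⟨hinj, ?_⟩
      simp [Fintype.card_fin, hn₁, mul_comm]
    refine ⟨fun j => (f j).1, ?_, ?_, fun j => (hf j).symm⟩
    · intro i
      obtain ⟨j, hj⟩ := hbij.2 (i, ⟨0, hβ⟩)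
      exact ⟨j, by show (f j).1 = i; rw [hj]⟩
    · intro i
      have : (univ.filter (fun j => (f j).1 = i)).card
          = (univ.filter (fun p : Fin n₀ × Fin β => p.1 = i)).card := by
        apply Finset.card_bij (fun j _ => f j)
        · intro j hj; simp only [mem_filter, mem_univ, true_and] at hj ⊢; exact hj
        · intro j _ j' _ h; exact hinj h
        · intro p hp
          obtain ⟨j, hj⟩ := hbij.2 p
          refine ⟨j, ?_, hj⟩
          simp only [mem_filter, mem_univ, true_and] at hp ⊢
          rw [hj]; exact hp
      rw [this]
      have : (univ.filter (fun p : Fin n₀ × Fin β => p.1 = i))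
          = ({i} : Finset (Fin n₀)) ×ˢ (univ : Finset (Fin β)) := by
        ext ⟨a, b⟩; simp [Finset.mem_product, Prod.ext_iff, eq_comm]
      rw [this, card_product, card_singleton, card_univ, Fintype.card_fin, one_mul]
  · rintro ⟨T, hsurj, hfib, hZ⟩ k
    have h1 : (univ.filter (fun j => Z1 j = k)) = (univ.filter (fun j => Z0 (T j) = k)) := by
      ext j; simp [hZ j]
    rw [h1]
    rw [Finset.card_eq_sum_card_fiberwise
      (f := T) (t := univ.filter (fun i => Z0 i = k))
      (fun j hj => by simp only [mem_coe, mem_filter, mem_univ, true_and] at hj ⊢; exact hj)]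
    have h2 : ∀ i ∈ univ.filter (fun i => Z0 i = k),
        ((univ.filter (fun j => Z0 (T j) = k)).filter (fun j => T j = i)).card = β := by
      intro i hi
      simp only [mem_filter, mem_univ, true_and] at hi
      rw [show ((univ.filter (fun j => Z0 (T j) = k)).filter (fun j => T j = i))
          = univ.filter (fun j => T j = i) by
        ext j
        simp only [mem_filter, mem_univ, true_and]
        constructor
        · rintro ⟨_, h⟩; exact h
        · intro h; exact ⟨by rw [h, hi], h⟩]
      exact hfib i
    rw [Finset.sum_congr rfl h2, Finset.sum_const, smul_eq_mul, mul_comm]
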